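/- Let n ≥ 8 and partition an n-element vertex set into sets U_1, U_2, U_3, U_4, {x, y} with ⌊(n-2)/4⌋ ≤ |U_1| ≤ |U_2| ≤ |U_3| ≤ |U_4| ≤ ⌈(n-2)/4⌉. Let G be obtained from K_n by deleting all edges between U_1 and U_4 and all edges between U_2 and U_3. Then (a) the minimum degree of G equals n - 1 - ⌈(n-2)/4⌉ = ⌊(3n-2)/4⌋, and (b) there exists a 2-edge-coloring of G whose longest monochromatic cycle has length at most 2⌈(n-2)/4⌉ + 1, which is strictly less than 2⌊n/3⌋ + (n mod 3). -/

import Mathlib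

open SimpleGraph

/-- `G` contains a cycle of length `ℓ`. -/
def hasCycleLength {V : Type*} (G : SimpleGraph V) (ℓ : ℕ) : Prop :=
  ∃ (u : V) (c : G.Walk u u), c.IsCycle ∧ c.length = ℓ

section Aux

variable {V : Type*}

lemma walk_dropLast_subset {H : SimpleGraph V} {S : Set V} {x : V}
    (hcl : ∀ a b, a ∈ S → H.Adj a b → b = x ∨ b ∈ S) :
    ∀ {a b : V} (p : H.Walk a b), a ∈ S → x ∉ p.support.dropLast →
      ∀ v ∈ p.support.dropLast, v ∈ S := by
  intro a b p
  induction p with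
  | nil => simp
  | @cons a c b hadj q ih =>
    intro ha hx v hv
    have hd : (SimpleGraph.Walk.cons hadj q).support.dropLast = a :: q.support.dropLast := by
      rw [SimpleGraph.Walk.support_cons, List.dropLast_cons_of_ne_nil q.support_ne_nil]
    rw [hd] at hv hx
    rcases List.mem_cons.1 hv with rfl | hv
    · exact ha
    · rcases hcl a c ha hadj with rfl | hc
      · -- next vertex is x; then q.support.dropLast must contain x at its head
        exfalso
        apply hx
        cases q with
        | nil => simp at hv
        | cons hadj2 q2 =>
          right
          have : (SimpleGraph.Walk.cons hadj2 q2).support.dropLast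
              = c :: q2.support.dropLast := by
            rw [SimpleGraph.Walk.support_cons,
              List.dropLast_cons_of_ne_nil q2.support_ne_nil]
          rw [this]
          exact List.mem_cons_self
      · exact ih hc (fun h => hx (List.mem_cons_of_mem _ h)) v hv

lemma cycle_support_len_le [DecidableEq V] {H : SimpleGraph V} {u : V}
    {c : H.Walk u u} (hc : c.IsCycle) (S : Finset V)
    (hS : ∀ v ∈ c.support.tail, v ∈ S) : c.length ≤ S.card := by
  have hnd := hc.support_nodup
  have h1 : c.support.tail.toFinset.card = c.support.tail.length :=
    List.toFinset_card_of_nodup hnd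
  have h2 : c.support.length = c.length + 1 := c.length_support
  have h3 : c.support.tail.length = c.length := by
    have := c.support_ne_nil
    rw [List.length_tail]; omega
  have h4 : c.support.tail.toFinset ⊆ S := by
    intro v hv
    exact hS v (List.mem_toFinset.1 hv)
  calc c.length = c.support.tail.toFinset.card := by rw [h1, h3]
    _ ≤ S.card := Finset.card_le_card h4

lemma cycle_bound [Fintype V] [DecidableEq V] {H : SimpleGraph V} {x : V} {m : ℕ}
    (hS : ∀ v : V, v ≠ x → ∃ S : Finset V, v ∈ S ∧ S.card ≤ m ∧ x ∉ S ∧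
        ∀ a b, a ∈ (S : Set V) → H.Adj a b → b = x ∨ b ∈ (S : Set V)) :
    ∀ ℓ : ℕ, hasCycleLength H ℓ → ℓ ≤ m + 1 := by
  rintro ℓ ⟨u, c, hc, rfl⟩
  by_cases hx : x ∈ c.support
  · -- rotate the cycle to start at x
    have hcyc' : (c.rotate x hx).IsCycle := hc.rotate hx
    have hlen : (c.rotate x hx).length = c.length := by
      have h := (SimpleGraph.Walk.rotate_darts c x hx).perm.length_eq
      rwa [SimpleGraph.Walk.length_darts, SimpleGraph.Walk.length_darts] at h
    rw [← hlen]
    generalize c.rotate x hx = c' at hcyc'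
    clear hlen hc hx c
    cases c' with
    | nil => exact absurd hcyc'.ne_nil (by simp)
    | @cons _ w _ hadj p =>
      have hw : w ≠ x := hadj.ne'
      obtain ⟨S, hwS, hcard, hxS, hclose⟩ := hS w hw
      have htail : (SimpleGraph.Walk.cons hadj p).support.tail = p.support := by
        simp [SimpleGraph.Walk.support_cons]
      have hnd : p.support.Nodup := by
        have := hcyc'.support_nodup
        rwa [htail] at this
      have hsplit : p.support.dropLast ++ [x] = p.support := by
        have h := List.dropLast_append_getLast (l := p.support) p.support_ne_nil
        rwa [p.getLast_support] at h
      have hxd : x ∉ p.support.dropLast := by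
        intro hmem
        rw [← hsplit] at hnd
        exact (List.disjoint_of_nodup_append hnd) hmem (List.mem_singleton_self x)
      have hsub : ∀ v ∈ p.support.dropLast, v ∈ (S : Set V) :=
        walk_dropLast_subset hclose p hwS hxd
      have hall : ∀ v ∈ (SimpleGraph.Walk.cons hadj p).support.tail, v ∈ insert x S := by
        intro v hv
        rw [htail, ← hsplit] at hv
        rcases List.mem_append.1 hv with hv | hv
        · exact Finset.mem_insert_of_mem (hsub v hv)
        · rw [List.mem_singleton.1 hv]; exact Finset.mem_insert_self _ _
      have := cycle_support_len_le hcyc' (insert x S) hall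
      calc (SimpleGraph.Walk.cons hadj p).length ≤ (insert x S).card := this
        _ ≤ S.card + 1 := Finset.card_insert_le _ _
        _ ≤ m + 1 := by omega
  · have hu : u ≠ x := fun h => hx (h ▸ c.start_mem_support)
    obtain ⟨S, huS, hcard, hxS, hclose⟩ := hS u hu
    have hxd : x ∉ c.support.dropLast := fun h => hx (List.dropLast_sublist _ |>.subset h)
    have hsub : ∀ v ∈ c.support.dropLast, v ∈ (S : Set V) :=
      walk_dropLast_subset hclose c huS hxd
    have hsplit : c.support.dropLast ++ [u] = c.support := by
      have h := List.dropLast_append_getLast (l := c.support) c.support_ne_nil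
      rwa [c.getLast_support] at h
    have hall : ∀ v ∈ c.support.tail, v ∈ S := by
      intro v hv
      have hv' : v ∈ c.support := List.tail_sublist _ |>.subset hv
      rw [← hsplit] at hv'
      rcases List.mem_append.1 hv' with hv' | hv'
      · exact hsub v hv'
      · rw [List.mem_singleton.1 hv']; exact huS
    have := cycle_support_len_le hc S hall
    omega

end Aux

/- Note on natural-number arithmetic: `⌈(n-2)/4⌉ = (n+1)/4` and
`⌊(3n-2)/4⌋ = (3*n-2)/4`, and with `n = 3t + r`, `2t + r = 2*(n/3) + n % 3`. -/
theorem stmt2 (n : ℕ) (hn : 8 ≤ n) (V : Type) [Fintype V] [DecidableEq V]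
    (hcard : Fintype.card V = n)
    (U1 U2 U3 U4 : Finset V) (x y : V) (hxy : x ≠ y)
    (hdisj : ([U1, U2, U3, U4, {x, y}] : List (Finset V)).Pairwise Disjoint)
    (hcover : U1 ∪ U2 ∪ U3 ∪ U4 ∪ {x, y} = (Finset.univ : Finset V))
    (hsize1 : (n - 2) / 4 ≤ U1.card) (h12 : U1.card ≤ U2.card)
    (h23 : U2.card ≤ U3.card) (h34 : U3.card ≤ U4.card)
    (hsize4 : U4.card ≤ (n + 1) / 4) :
    -- `G` is `K_n` minus all edges between `U1` and `U4` and between `U2` and `U3`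
    let G : SimpleGraph V :=
      SimpleGraph.fromRel (fun v w =>
        ¬ ((v ∈ U1 ∧ w ∈ U4) ∨ (v ∈ U4 ∧ w ∈ U1) ∨
           (v ∈ U2 ∧ w ∈ U3) ∨ (v ∈ U3 ∧ w ∈ U2)))
    -- (a) the minimum degree of `G` equals `n - 1 - ⌈(n-2)/4⌉ = ⌊(3n-2)/4⌋`
    (@SimpleGraph.minDegree V G _ (Classical.decRel _) = n - 1 - (n + 1) / 4 ∧
      n - 1 - (n + 1) / 4 = (3 * n - 2) / 4) ∧
    -- (b) some 2-edge-coloring of `G` has monochromatic circumference at most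
    -- `2⌈(n-2)/4⌉ + 1`, which is strictly less than `2⌊n/3⌋ + (n mod 3)`
    (∃ R B : SimpleGraph V, R ⊔ B = G ∧
      (∀ ℓ : ℕ, (hasCycleLength R ℓ ∨ hasCycleLength B ℓ) →
        ℓ ≤ 2 * ((n + 1) / 4) + 1) ∧
      2 * ((n + 1) / 4) + 1 < 2 * (n / 3) + n % 3) := by
  intro G
  have hG : G = SimpleGraph.fromRel (fun v w =>
      ¬ ((v ∈ U1 ∧ w ∈ U4) ∨ (v ∈ U4 ∧ w ∈ U1) ∨
         (v ∈ U2 ∧ w ∈ U3) ∨ (v ∈ U3 ∧ w ∈ U2))) := rfl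
  clear_value G
  -- extract disjointness facts
  obtain ⟨ha1, hdisj⟩ := List.pairwise_cons.mp hdisj
  obtain ⟨ha2, hdisj⟩ := List.pairwise_cons.mp hdisj
  obtain ⟨ha3, hdisj⟩ := List.pairwise_cons.mp hdisj
  obtain ⟨ha4, -⟩ := List.pairwise_cons.mp hdisj
  have d12 : Disjoint U1 U2 := ha1 U2 (by simp)
  have d13 : Disjoint U1 U3 := ha1 U3 (by simp)
  have d14 : Disjoint U1 U4 := ha1 U4 (by simp)
  have d1xy : Disjoint U1 {x, y} := ha1 {x, y} (by simp)
  have d23 : Disjoint U2 U3 := ha2 U3 (by simp)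
  have d24 : Disjoint U2 U4 := ha2 U4 (by simp)
  have d2xy : Disjoint U2 {x, y} := ha2 {x, y} (by simp)
  have d34 : Disjoint U3 U4 := ha3 U4 (by simp)
  have d3xy : Disjoint U3 {x, y} := ha3 {x, y} (by simp)
  have d4xy : Disjoint U4 {x, y} := ha4 {x, y} (by simp)
  have hx1 : x ∉ U1 := fun h => Finset.disjoint_left.mp d1xy h (by simp)
  have hx2 : x ∉ U2 := fun h => Finset.disjoint_left.mp d2xy h (by simp)
  have hx3 : x ∉ U3 := fun h => Finset.disjoint_left.mp d3xy h (by simp)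
  have hx4 : x ∉ U4 := fun h => Finset.disjoint_left.mp d4xy h (by simp)
  have hy1 : y ∉ U1 := fun h => Finset.disjoint_left.mp d1xy h (by simp)
  have hy2 : y ∉ U2 := fun h => Finset.disjoint_left.mp d2xy h (by simp)
  have hy3 : y ∉ U3 := fun h => Finset.disjoint_left.mp d3xy h (by simp)
  have hy4 : y ∉ U4 := fun h => Finset.disjoint_left.mp d4xy h (by simp)
  have D12 : ∀ v, v ∈ U1 → v ∈ U2 → False := fun v h1 h2 => Finset.disjoint_left.mp d12 h1 h2
  have D13 : ∀ v, v ∈ U1 → v ∈ U3 → False := fun v h1 h2 => Finset.disjoint_left.mp d13 h1 h2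
  have D14 : ∀ v, v ∈ U1 → v ∈ U4 → False := fun v h1 h2 => Finset.disjoint_left.mp d14 h1 h2
  have D23 : ∀ v, v ∈ U2 → v ∈ U3 → False := fun v h1 h2 => Finset.disjoint_left.mp d23 h1 h2
  have D24 : ∀ v, v ∈ U2 → v ∈ U4 → False := fun v h1 h2 => Finset.disjoint_left.mp d24 h1 h2
  have D34 : ∀ v, v ∈ U3 → v ∈ U4 → False := fun v h1 h2 => Finset.disjoint_left.mp d34 h1 h2
  have hmem : ∀ v : V, v ∈ U1 ∨ v ∈ U2 ∨ v ∈ U3 ∨ v ∈ U4 ∨ v = x ∨ v = y := by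
    intro v
    have hv : v ∈ U1 ∪ U2 ∪ U3 ∪ U4 ∪ {x, y} := hcover ▸ Finset.mem_univ v
    simp only [Finset.mem_union, Finset.mem_insert, Finset.mem_singleton] at hv
    clear * - hv
    tauto
  have hGadj : ∀ v w : V, G.Adj v w ↔ v ≠ w ∧
      ¬ ((v ∈ U1 ∧ w ∈ U4) ∨ (v ∈ U4 ∧ w ∈ U1) ∨
         (v ∈ U2 ∧ w ∈ U3) ∨ (v ∈ U3 ∧ w ∈ U2)) := by
    intro v w
    rw [hG, SimpleGraph.fromRel_adj]
    constructor
    · rintro ⟨hne, h | h⟩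
      · exact ⟨hne, h⟩
      · refine ⟨hne, fun hP => h ?_⟩
        clear * - hP
        tauto
    · rintro ⟨hne, h⟩
      exact ⟨hne, Or.inl h⟩
  -- cardinalities
  have hcard2 : ({x, y} : Finset V).card = 2 := by
    rw [Finset.card_insert_of_notMem (by simpa using hxy), Finset.card_singleton]
  have hsum : U1.card + U2.card + U3.card + U4.card + 2 = n := by
    have e1 : (U1 ∪ U2 ∪ U3 ∪ U4 ∪ {x, y}).card = n := by rw [hcover, Finset.card_univ, hcard]
    rw [Finset.card_union_of_disjoint (by
        simp only [Finset.disjoint_union_left]; exact ⟨⟨⟨d1xy, d2xy⟩, d3xy⟩, d4xy⟩),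
      Finset.card_union_of_disjoint (by
        simp only [Finset.disjoint_union_left]; exact ⟨⟨d14, d24⟩, d34⟩),
      Finset.card_union_of_disjoint (by
        simp only [Finset.disjoint_union_left]; exact ⟨d13, d23⟩),
      Finset.card_union_of_disjoint d12, hcard2] at e1
    omega
  have hc4 : U4.card = (n + 1) / 4 := by omega
  have hU1pos : 1 ≤ U1.card := by omega
  letI instGA : DecidableRel G.Adj := Classical.decRel _
  haveI : Nonempty V := Fintype.card_pos_iff.mp (by omega)
  constructor
  · constructor
    · -- minimum degree
      have hdegge : ∀ v : V, n - 1 - (n + 1) / 4 ≤ G.degree v := by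
        intro v
        obtain ⟨S, hcardS, hadjS⟩ : ∃ S : Finset V, S.card ≤ (n + 1) / 4 ∧
            ∀ w, w ≠ v → w ∉ S → G.Adj v w := by
          rcases hmem v with h | h | h | h | h | h
          · exact ⟨U4, by omega, fun w hw hwS => (hGadj v w).2
              ⟨fun e => hw e.symm, by
                have a2 := D12 v; have a3 := D13 v; have a4 := D14 v
                clear * - h hwS a2 a3 a4; tauto⟩⟩
          · exact ⟨U3, by omega, fun w hw hwS => (hGadj v w).2
              ⟨fun e => hw e.symm, by
                have a2 := D12 v; have a3 := D23 v; have a4 := D24 v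
                clear * - h hwS a2 a3 a4; tauto⟩⟩
          · exact ⟨U2, by omega, fun w hw hwS => (hGadj v w).2
              ⟨fun e => hw e.symm, by
                have a2 := D13 v; have a3 := D23 v; have a4 := D34 v
                clear * - h hwS a2 a3 a4; tauto⟩⟩
          · exact ⟨U1, by omega, fun w hw hwS => (hGadj v w).2
              ⟨fun e => hw e.symm, by
                have a2 := D14 v; have a3 := D24 v; have a4 := D34 v
                clear * - h hwS a2 a3 a4; tauto⟩⟩
          · subst h
            exact ⟨∅, by simp, fun w hw _ => (hGadj _ w).2
              ⟨fun e => hw e.symm, by clear * - hx1 hx2 hx3 hx4; tauto⟩⟩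
          · subst h
            exact ⟨∅, by simp, fun w hw _ => (hGadj _ w).2
              ⟨fun e => hw e.symm, by clear * - hy1 hy2 hy3 hy4; tauto⟩⟩
        have hsub : Finset.univ \ insert v S ⊆ G.neighborFinset v := by
          intro w hw
          rw [Finset.mem_sdiff, Finset.mem_insert] at hw
          push_neg at hw
          rw [SimpleGraph.mem_neighborFinset]
          exact hadjS w hw.2.1 hw.2.2
        have h1 : (Finset.univ \ insert v S).card = n - (insert v S).card := by
          rw [Finset.card_sdiff_of_subset (Finset.subset_univ _), Finset.card_univ, hcard]
        have h2 : (insert v S).card ≤ (n + 1) / 4 + 1 := by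
          have := Finset.card_insert_le v S; omega
        have h3 := Finset.card_le_card hsub
        have hdeg : G.degree v = (G.neighborFinset v).card := rfl
        omega
      obtain ⟨v0, hv0⟩ := Finset.card_pos.mp (by omega : 0 < U1.card)
      have hdeg0 : G.degree v0 = n - 1 - (n + 1) / 4 := by
        have hnb : G.neighborFinset v0 = Finset.univ \ insert v0 U4 := by
          ext w
          rw [SimpleGraph.mem_neighborFinset, hGadj, Finset.mem_sdiff, Finset.mem_insert]
          constructor
          · rintro ⟨hne, hnp⟩
            refine ⟨Finset.mem_univ _, ?_⟩
            push_neg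
            exact ⟨fun e => hne e.symm, fun hw => hnp (Or.inl ⟨hv0, hw⟩)⟩
          · rintro ⟨-, hw⟩
            push_neg at hw
            refine ⟨fun e => hw.1 e.symm, ?_⟩
            have a2 := D12 v0; have a3 := D13 v0; have a4 := D14 v0
            clear * - hv0 hw a2 a3 a4
            tauto
        have hdeg : G.degree v0 = (G.neighborFinset v0).card := rfl
        rw [hdeg, hnb, Finset.card_sdiff_of_subset (Finset.subset_univ _), Finset.card_univ, hcard,
          Finset.card_insert_of_notMem (fun h => D14 v0 hv0 h), hc4]
        omega
      refine le_antisymm ?_ ?_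
      · exact hdeg0 ▸ SimpleGraph.minDegree_le_degree G v0
      · exact SimpleGraph.le_minDegree_of_forall_le_degree G _ hdegge
    · omega
  · -- the coloring
    set R : SimpleGraph V := SimpleGraph.fromRel (fun v w =>
      v = x ∨ w = x ∨ (v ∈ U1 ∧ w ∈ U3) ∨ (v ∈ U3 ∧ w ∈ U1) ∨
        (v ∈ U2 ∧ w ∈ U4) ∨ (v ∈ U4 ∧ w ∈ U2)) with hRdef
    have hRadj : ∀ v w : V, R.Adj v w ↔ v ≠ w ∧
        (v = x ∨ w = x ∨ (v ∈ U1 ∧ w ∈ U3) ∨ (v ∈ U3 ∧ w ∈ U1) ∨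
          (v ∈ U2 ∧ w ∈ U4) ∨ (v ∈ U4 ∧ w ∈ U2)) := by
      intro v w
      rw [hRdef, SimpleGraph.fromRel_adj]
      constructor
      · rintro ⟨hne, h | h⟩
        · exact ⟨hne, h⟩
        · refine ⟨hne, ?_⟩
          clear * - h
          tauto
      · rintro ⟨hne, h⟩
        exact ⟨hne, Or.inl h⟩
    have hRG : R ≤ G := by
      intro v w h
      rw [hRadj] at h
      obtain ⟨hne, h⟩ := h
      rw [hGadj]
      refine ⟨hne, ?_⟩
      rcases h with rfl | rfl | ⟨h1, h2⟩ | ⟨h1, h2⟩ | ⟨h1, h2⟩ | ⟨h1, h2⟩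
      · clear * - hx1 hx2 hx3 hx4; tauto
      · clear * - hx1 hx2 hx3 hx4; tauto
      · rintro (⟨-, hw⟩ | ⟨hv', -⟩ | ⟨hv', -⟩ | ⟨hv', -⟩)
        exacts [D34 w h2 hw, D14 v h1 hv', D12 v h1 hv', D13 v h1 hv']
      · rintro (⟨hv', -⟩ | ⟨hv', -⟩ | ⟨hv', -⟩ | ⟨-, hw⟩)
        exacts [D13 v hv' h1, D34 v h1 hv', D23 v hv' h1, D12 w h2 hw]
      · rintro (⟨hv', -⟩ | ⟨-, hw⟩ | ⟨-, hw⟩ | ⟨hv', -⟩)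
        exacts [D12 v hv' h1, D14 w hw h2, D34 w hw h2, D23 v h1 hv']
      · rintro (⟨hv', -⟩ | ⟨-, hw⟩ | ⟨hv', -⟩ | ⟨hv', -⟩)
        exacts [D14 v hv' h1, D12 w hw h2, D24 v hv' h1, D34 v hv' h1]
    refine ⟨R, G \ R, sup_sdiff_cancel_right hRG, ?_, by omega⟩
    have hBadj : ∀ v w : V, (G \ R).Adj v w ↔ G.Adj v w ∧ ¬R.Adj v w :=
      fun v w => SimpleGraph.sdiff_adj G R v w
    intro ℓ hl
    rcases hl with hR | hB
    · -- red cycles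
      refine cycle_bound (x := x) (m := 2 * ((n + 1) / 4)) ?_ ℓ hR
      intro v hv
      have hclose13 : ∀ a b : V, a ∈ ((U1 ∪ U3 : Finset V) : Set V) → R.Adj a b →
          b = x ∨ b ∈ ((U1 ∪ U3 : Finset V) : Set V) := by
        intro a b ha hab
        simp only [Finset.coe_union, Set.mem_union, Finset.mem_coe] at ha ⊢
        rw [hRadj] at hab
        obtain ⟨hne, h⟩ := hab
        have hax : a ≠ x := by rintro rfl; rcases ha with h | h; exacts [hx1 h, hx3 h]
        have a1 := D12 a; have a2 := D14 a; have a3 := D23 a; have a4 := D34 a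
        clear * - ha h hax a1 a2 a3 a4
        tauto
      have hclose24 : ∀ a b : V, a ∈ ((U2 ∪ U4 : Finset V) : Set V) → R.Adj a b →
          b = x ∨ b ∈ ((U2 ∪ U4 : Finset V) : Set V) := by
        intro a b ha hab
        simp only [Finset.coe_union, Set.mem_union, Finset.mem_coe] at ha ⊢
        rw [hRadj] at hab
        obtain ⟨hne, h⟩ := hab
        have hax : a ≠ x := by rintro rfl; rcases ha with h | h; exacts [hx2 h, hx4 h]
        have a1 := D12 a; have a2 := D23 a; have a3 := D14 a; have a4 := D34 a
        clear * - ha h hax a1 a2 a3 a4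
        tauto
      have hclosey : ∀ a b : V, a ∈ (({y} : Finset V) : Set V) → R.Adj a b →
          b = x ∨ a ∈ (({y} : Finset V) : Set V) := by
        intro a b ha hab; exact Or.inr ha
      rcases hmem v with h | h | h | h | h | h
      · exact ⟨U1 ∪ U3, by simp [h], by
          have := Finset.card_union_le U1 U3; omega, by simp [hx1, hx3], hclose13⟩
      · exact ⟨U2 ∪ U4, by simp [h], by
          have := Finset.card_union_le U2 U4; omega, by simp [hx2, hx4], hclose24⟩
      · exact ⟨U1 ∪ U3, by simp [h], by
          have := Finset.card_union_le U1 U3; omega, by simp [hx1, hx3], hclose13⟩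
      · exact ⟨U2 ∪ U4, by simp [h], by
          have := Finset.card_union_le U2 U4; omega, by simp [hx2, hx4], hclose24⟩
      · exact absurd h hv
      · subst h
        refine ⟨{v}, by simp, by simp; omega, by simpa using (Ne.symm hv), ?_⟩
        intro a b ha hab
        simp only [Finset.coe_singleton, Set.mem_singleton_iff] at ha ⊢
        subst ha
        rw [hRadj] at hab
        obtain ⟨hne, h⟩ := hab
        rcases h with rfl | rfl | ⟨h1, h2⟩ | ⟨h1, h2⟩ | ⟨h1, h2⟩ | ⟨h1, h2⟩
        · exact absurd rfl hv
        · exact Or.inl rfl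
        · exact absurd h1 hy1
        · exact absurd h1 hy3
        · exact absurd h1 hy2
        · exact absurd h1 hy4
    · -- blue cycles
      refine cycle_bound (x := y) (m := 2 * ((n + 1) / 4)) ?_ ℓ hB
      intro v hv
      have hBadj' : ∀ a b : V, (G \ R).Adj a b → a ≠ b ∧ b ≠ x ∧ a ≠ x ∧
          ¬ ((a ∈ U1 ∧ b ∈ U4) ∨ (a ∈ U4 ∧ b ∈ U1) ∨ (a ∈ U2 ∧ b ∈ U3) ∨ (a ∈ U3 ∧ b ∈ U2)) ∧
          (a ∈ U1 → b ∉ U3) ∧ (a ∈ U3 → b ∉ U1) ∧ (a ∈ U2 → b ∉ U4) ∧ (a ∈ U4 → b ∉ U2) := by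
        intro a b hab
        rw [hBadj, hGadj, hRadj] at hab
        obtain ⟨⟨hne, hP⟩, hnR⟩ := hab
        push_neg at hnR
        obtain ⟨hax', hbx', r13, r31, r24, r42⟩ := hnR hne
        exact ⟨hne, hbx', hax', hP, r13, r31, r24, r42⟩
      have hclose12 : ∀ a b : V, a ∈ ((U1 ∪ U2 : Finset V) : Set V) → (G \ R).Adj a b →
          b = y ∨ b ∈ ((U1 ∪ U2 : Finset V) : Set V) := by
        intro a b ha hab
        simp only [Finset.coe_union, Set.mem_union, Finset.mem_coe] at ha ⊢
        obtain ⟨hne, hbx, hax, hnG, r13, r31, r24, r42⟩ := hBadj' a b hab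
        rcases hmem b with h | h | h | h | h | h
        · exact Or.inr (Or.inl h)
        · exact Or.inr (Or.inr h)
        · exfalso
          rcases ha with ha | ha
          · exact r13 ha h
          · exact hnG (Or.inr (Or.inr (Or.inl ⟨ha, h⟩)))
        · exfalso
          rcases ha with ha | ha
          · exact hnG (Or.inl ⟨ha, h⟩)
          · exact r24 ha h
        · exact absurd h hbx
        · exact Or.inl h
      have hclose34 : ∀ a b : V, a ∈ ((U3 ∪ U4 : Finset V) : Set V) → (G \ R).Adj a b →
          b = y ∨ b ∈ ((U3 ∪ U4 : Finset V) : Set V) := by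
        intro a b ha hab
        simp only [Finset.coe_union, Set.mem_union, Finset.mem_coe] at ha ⊢
        obtain ⟨hne, hbx, hax, hnG, r13, r31, r24, r42⟩ := hBadj' a b hab
        rcases hmem b with h | h | h | h | h | h
        · exfalso
          rcases ha with ha | ha
          · exact r31 ha h
          · exact hnG (Or.inr (Or.inl ⟨ha, h⟩))
        · exfalso
          rcases ha with ha | ha
          · exact hnG (Or.inr (Or.inr (Or.inr ⟨ha, h⟩)))
          · exact r42 ha h
        · exact Or.inr (Or.inl h)
        · exact Or.inr (Or.inr h)
        · exact absurd h hbx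
        · exact Or.inl h
      rcases hmem v with h | h | h | h | h | h
      · exact ⟨U1 ∪ U2, by simp [h], by
          have := Finset.card_union_le U1 U2; omega, by simp [hy1, hy2], hclose12⟩
      · exact ⟨U1 ∪ U2, by simp [h], by
          have := Finset.card_union_le U1 U2; omega, by simp [hy1, hy2], hclose12⟩
      · exact ⟨U3 ∪ U4, by simp [h], by
          have := Finset.card_union_le U3 U4; omega, by simp [hy3, hy4], hclose34⟩
      · exact ⟨U3 ∪ U4, by simp [h], by
          have := Finset.card_union_le U3 U4; omega, by simp [hy3, hy4], hclose34⟩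
      · subst h
        refine ⟨{v}, by simp, by simp; omega, by simpa using hxy.symm, ?_⟩
        intro a b ha hab
        simp only [Finset.coe_singleton, Set.mem_singleton_iff] at ha
        obtain ⟨hne, hbx, hax, -, -⟩ := hBadj' a b hab
        exact absurd ha hax
      · exact absurd h hv
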